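/- Let W_1 ≥ W_2 ≥ ... ≥ W_n ≥ 0 with ∑ W_i = S. If σ_{k+1}(W_1,...,W_n) ≤ βS^{k+1} and σ_k(W_1,...,W_n) ≥ (α'/k!)·S^k with α' > 0, then ∑_{i=1}^k W_i ≥ (1 - (k+1)!·β/α')·S. -/

import Mathlib

open Finset

private lemma fin_strictMono_le {k : ℕ} (f : Fin k → ℕ) (hf : StrictMono f) :
    ∀ i : Fin k, (i : ℕ) ≤ f i := by
  intro i
  obtain ⟨m, hm⟩ := i
  induction m with
  | zero => exact Nat.zero_le _
  | succ j ih =>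
    have hj : j < k := Nat.lt_of_succ_lt hm
    have h1 : j ≤ f ⟨j, hj⟩ := ih hj
    have h2 : f ⟨j, hj⟩ < f ⟨j + 1, hm⟩ := hf (by simp [Fin.lt_def])
    show j + 1 ≤ f ⟨j + 1, hm⟩
    omega

/-- Sum over a k-subset of `range n` is at most the sum of the top k values. -/
private lemma sum_subset_le_top (n k : ℕ) (W : ℕ → ℝ)
    (hnn : ∀ i < n, 0 ≤ W i)
    (hmono : ∀ i j : ℕ, i ≤ j → j < n → W j ≤ W i)
    (t : Finset ℕ) (hts : t ⊆ Finset.range n) (htc : t.card = k) :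
    ∑ j ∈ t, W j ≤ ∑ i ∈ Finset.range k, W i := by
  set e := t.orderEmbOfFin htc with he
  have h1 : ∑ j ∈ t, W j = ∑ i : Fin k, W (e i) := by
    refine (Finset.sum_bij (fun (i : Fin k) _ => e i) ?_ ?_ ?_ ?_).symm
    · intro i _; exact t.orderEmbOfFin_mem htc i
    · intro a _ b _ h; exact e.injective h
    · intro j hj
      have : j ∈ Set.range e := by rw [Finset.range_orderEmbOfFin]; exact hj
      obtain ⟨i, hi⟩ := this
      exact ⟨i, Finset.mem_univ i, hi⟩
    · intro i _; rfl
  rw [h1, ← Fin.sum_univ_eq_sum_range]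
  apply Finset.sum_le_sum
  intro i _
  have hlt : e i < n := Finset.mem_range.mp (hts (t.orderEmbOfFin_mem htc i))
  exact hmono i (e i) (fin_strictMono_le e e.strictMono i) hlt

/-- Identity: `∑_{|t|=k} (∏_t W) (∑_{j∉t} W j) = (k+1) σ_{k+1}`. -/
private lemma key_identity (n k : ℕ) (W : ℕ → ℝ) :
    ∑ t ∈ (Finset.range n).powersetCard k,
        (∑ j ∈ Finset.range n \ t, W j) * ∏ i ∈ t, W i
      = (k + 1 : ℝ) * ∑ t ∈ (Finset.range n).powersetCard (k + 1), ∏ i ∈ t, W i := by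
  have lhs : ∑ t ∈ (Finset.range n).powersetCard k,
      (∑ j ∈ Finset.range n \ t, W j) * ∏ i ∈ t, W i
      = ∑ t ∈ (Finset.range n).powersetCard k, ∑ j ∈ Finset.range n \ t,
          ∏ i ∈ insert j t, W i := by
    refine Finset.sum_congr rfl fun t ht => ?_
    rw [Finset.sum_mul]
    refine Finset.sum_congr rfl fun j hj => ?_
    rw [Finset.prod_insert (Finset.mem_sdiff.mp hj).2]
  have rhs : (k + 1 : ℝ) * ∑ t ∈ (Finset.range n).powersetCard (k + 1), ∏ i ∈ t, W i
      = ∑ t ∈ (Finset.range n).powersetCard (k + 1), ∑ _j ∈ t, ∏ i ∈ t, W i := by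
    rw [Finset.mul_sum]
    refine Finset.sum_congr rfl fun t ht => ?_
    rw [Finset.sum_const, (Finset.mem_powersetCard.mp ht).2]
    push_cast; ring
  rw [lhs, rhs, Finset.sum_sigma', Finset.sum_sigma']
  refine Finset.sum_nbij' (fun p => ⟨insert p.2 p.1, p.2⟩) (fun p => ⟨p.1.erase p.2, p.2⟩)
    ?_ ?_ ?_ ?_ ?_
  · rintro ⟨t, j⟩ hp
    simp only [Finset.mem_sigma, Finset.mem_powersetCard] at hp ⊢
    obtain ⟨⟨hts, htc⟩, hj⟩ := hp
    have hj' := Finset.mem_sdiff.mp hj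
    exact ⟨⟨Finset.insert_subset hj'.1 hts, by rw [Finset.card_insert_of_notMem hj'.2, htc]⟩,
      Finset.mem_insert_self _ _⟩
  · rintro ⟨s, j⟩ hp
    simp only [Finset.mem_sigma, Finset.mem_powersetCard] at hp ⊢
    obtain ⟨⟨hss, hsc⟩, hj⟩ := hp
    refine ⟨⟨(Finset.erase_subset _ _).trans hss, by rw [Finset.card_erase_of_mem hj, hsc]; rfl⟩, ?_⟩
    exact Finset.mem_sdiff.mpr ⟨hss hj, Finset.notMem_erase _ _⟩
  · rintro ⟨t, j⟩ hp
    simp only [Finset.mem_sigma, Finset.mem_powersetCard] at hp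
    have hj' := Finset.mem_sdiff.mp hp.2
    simp [Finset.erase_insert hj'.2]
  · rintro ⟨s, j⟩ hp
    simp only [Finset.mem_sigma, Finset.mem_powersetCard] at hp
    simp [Finset.insert_erase hp.2]
  · rintro ⟨t, j⟩ hp; rfl

/-- If `σ_{k+1} ≤ β S^{k+1}` and `σ_k ≥ (α'/k!) S^k` with `α' > 0`, then the
k largest terms sum to at least `(1 - (k+1)! β / α') S`. -/
theorem stmt_6 (n k : ℕ) (hnk : k + 1 ≤ n) (W : ℕ → ℝ) (α' β : ℝ)
    (hα' : 0 < α') (hβ : 0 < β)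
    (hnn : ∀ i < n, 0 ≤ W i)
    (hmono : ∀ i j : ℕ, i ≤ j → j < n → W j ≤ W i)
    (hσk1 : ∑ t ∈ (Finset.range n).powersetCard (k + 1), ∏ i ∈ t, W i
      ≤ β * (∑ i ∈ Finset.range n, W i) ^ (k + 1))
    (hσk : (α' / (Nat.factorial k : ℝ)) * (∑ i ∈ Finset.range n, W i) ^ k
      ≤ ∑ t ∈ (Finset.range n).powersetCard k, ∏ i ∈ t, W i) :
    (1 - (Nat.factorial (k + 1) : ℝ) * β / α') * (∑ i ∈ Finset.range n, W i)
      ≤ ∑ i ∈ Finset.range k, W i := by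
  set S := ∑ i ∈ Finset.range n, W i with hS
  set A := ∑ i ∈ Finset.range k, W i with hA
  have hkn' : k ≤ n := Nat.le_of_succ_le hnk
  have hA0 : 0 ≤ A := Finset.sum_nonneg fun i hi =>
    hnn i (lt_of_lt_of_le (Finset.mem_range.mp hi) hkn')
  have hS0 : 0 ≤ S := Finset.sum_nonneg fun i hi => hnn i (Finset.mem_range.mp hi)
  rcases eq_or_lt_of_le hS0 with hSz | hSpos
  · rw [← hSz, mul_zero]; exact hA0
  -- the tail sum
  have hAS : A ≤ S := by
    rw [hS, hA, ← Finset.sum_range_add_sum_Ico W hkn']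
    have : 0 ≤ ∑ i ∈ Finset.Ico k n, W i :=
      Finset.sum_nonneg fun i hi => hnn i (Finset.mem_Ico.mp hi).2
    linarith
  -- main combinatorial bound: (S - A) * σ_k ≤ (k+1) σ_{k+1}
  have hσknn : ∀ t ∈ (Finset.range n).powersetCard k, (0:ℝ) ≤ ∏ i ∈ t, W i := by
    intro t ht
    obtain ⟨hts, _⟩ := Finset.mem_powersetCard.mp ht
    exact Finset.prod_nonneg fun i hi => hnn i (Finset.mem_range.mp (hts hi))
  have hmain : (S - A) * (∑ t ∈ (Finset.range n).powersetCard k, ∏ i ∈ t, W i)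
      ≤ (k + 1 : ℝ) * ∑ t ∈ (Finset.range n).powersetCard (k + 1), ∏ i ∈ t, W i := by
    rw [← key_identity n k W, Finset.mul_sum]
    refine Finset.sum_le_sum fun t ht => ?_
    obtain ⟨hts, htc⟩ := Finset.mem_powersetCard.mp ht
    have h1 : ∑ j ∈ t, W j ≤ A := sum_subset_le_top n k W hnn hmono t hts htc
    have h2 : ∑ j ∈ Finset.range n \ t, W j = S - ∑ j ∈ t, W j := by
      rw [hS, Finset.sum_sdiff_eq_sub hts]
    have h3 : S - A ≤ ∑ j ∈ Finset.range n \ t, W j := by rw [h2]; linarith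
    exact mul_le_mul_of_nonneg_right h3 (hσknn t ht) |>.trans
      (le_of_eq rfl)
  -- chain inequalities
  have hσkpos : (α' / (Nat.factorial k : ℝ)) * S ^ k
      ≤ ∑ t ∈ (Finset.range n).powersetCard k, ∏ i ∈ t, W i := hσk
  have hSA : 0 ≤ S - A := by linarith
  have step1 : (S - A) * ((α' / (Nat.factorial k : ℝ)) * S ^ k)
      ≤ (k + 1 : ℝ) * (β * S ^ (k + 1)) := by
    calc (S - A) * ((α' / (Nat.factorial k : ℝ)) * S ^ k)
        ≤ (S - A) * (∑ t ∈ (Finset.range n).powersetCard k, ∏ i ∈ t, W i) :=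
          mul_le_mul_of_nonneg_left hσkpos hSA
      _ ≤ (k + 1 : ℝ) * ∑ t ∈ (Finset.range n).powersetCard (k + 1), ∏ i ∈ t, W i := hmain
      _ ≤ (k + 1 : ℝ) * (β * S ^ (k + 1)) := by
          apply mul_le_mul_of_nonneg_left hσk1; positivity
  -- divide through
  have hfk : (0:ℝ) < (Nat.factorial k : ℝ) := by exact_mod_cast Nat.factorial_pos k
  have hSk : (0:ℝ) < S ^ k := pow_pos hSpos k
  have step2 : (S - A) * α' ≤ (k + 1 : ℝ) * (Nat.factorial k : ℝ) * β * S := by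
    have h := step1
    rw [pow_succ] at h
    have h' : (S - A) * α' * S ^ k ≤ (k + 1 : ℝ) * (Nat.factorial k : ℝ) * β * S * S ^ k := by
      have hne : (Nat.factorial k : ℝ) ≠ 0 := ne_of_gt hfk
      have := mul_le_mul_of_nonneg_left h (le_of_lt hfk)
      calc (S - A) * α' * S ^ k
          = (Nat.factorial k : ℝ) * ((S - A) * (α' / (Nat.factorial k : ℝ) * S ^ k)) := by
            field_simp
        _ ≤ (Nat.factorial k : ℝ) * ((k + 1 : ℝ) * (β * (S ^ k * S))) := this
        _ = (k + 1 : ℝ) * (Nat.factorial k : ℝ) * β * S * S ^ k := by ring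
    exact le_of_mul_le_mul_right h' hSk
  have hfact : ((Nat.factorial (k + 1) : ℝ)) = (k + 1 : ℝ) * (Nat.factorial k : ℝ) := by
    rw [Nat.factorial_succ]; push_cast; ring
  -- conclude
  have : S - A ≤ (Nat.factorial (k + 1) : ℝ) * β / α' * S := by
    rw [hfact]
    rw [div_mul_eq_mul_div, le_div_iff₀ hα']
    calc (S - A) * α' ≤ (k + 1 : ℝ) * (Nat.factorial k : ℝ) * β * S := step2
      _ = (k + 1 : ℝ) * (Nat.factorial k : ℝ) * β * S := rfl
    
  linarith [this]
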